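/- For every finite set F of circles in the plane ℝ², the operator X ↦ ch(X) := {C ∈ F : C ⊆ conv(⋃_{D∈X} D)} is a closure operator on F satisfying ch(∅)=∅ and the anti-exchange property; hence (F, ch) is a convex geometry. -/

import Mathlib

/-- A circle in the plane `ℝ²`. -/
def IsCircle (C : Set (ℝ × ℝ)) : Prop :=
  ∃ u v r : ℝ, 0 ≤ r ∧ C = {p : ℝ × ℝ | (p.1 - u) ^ 2 + (p.2 - v) ^ 2 = r ^ 2}

/-- The closure operator determined by a set `F` of circles:
`ch F X = {C ∈ F : C ⊆ conv(⋃ X)}`. -/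
def circCh (F X : Set (Set (ℝ × ℝ))) : Set (Set (ℝ × ℝ)) :=
  {C | C ∈ F ∧ C ⊆ convexHull ℝ (⋃₀ X)}

private lemma dot_le_supp {a b u v r : ℝ} (hab : a^2+b^2 = 1) (hr : 0 ≤ r)
    {p : ℝ × ℝ} (hp : (p.1-u)^2 + (p.2-v)^2 = r^2) :
    a*p.1 + b*p.2 ≤ a*u + b*v + r := by
  nlinarith [sq_nonneg (a*(p.2-v) - b*(p.1-u)), sq_nonneg (a*(p.1-u) + b*(p.2-v) + r),
    sq_nonneg (a*(p.1-u) + b*(p.2-v) - r)]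

private lemma conv_halfspace {S : Set (ℝ×ℝ)} {a b M : ℝ}
    (h : ∀ q ∈ S, a*q.1 + b*q.2 ≤ M) : ∀ q ∈ convexHull ℝ S, a*q.1+b*q.2 ≤ M := by
  have hc : Convex ℝ {q : ℝ×ℝ | a*q.1+b*q.2 ≤ M} := by
    apply convex_halfSpace_le
    exact ⟨fun p q => by simp; ring, fun c p => by simp; ring⟩
  exact fun q hq => convexHull_min h hc hq

private lemma perturb_bound {x y p1 p2 ε R : ℝ} (hx : |x| ≤ ε) (hy : |y| ≤ ε)
    (h1 : |p1| ≤ R) (h2 : |p2| ≤ R) (hε : 0 ≤ ε) : |x*p1 + y*p2| ≤ 2*ε*R := by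
  calc |x*p1+y*p2| ≤ |x*p1| + |y*p2| := abs_add_le _ _
  _ = |x| * |p1| + |y| * |p2| := by rw [abs_mul, abs_mul]
  _ ≤ ε*R + ε*R := by
      have hR : 0 ≤ R := le_trans (abs_nonneg _) h1
      gcongr
  _ = 2*ε*R := by ring

private lemma pert_aux {x y τ g ε : ℝ} (hx : |x| ≤ 1) (hy : |y| ≤ 1) (hτ : 0 < τ)
    (hτ1 : τ ≤ 1) (hτε : 2*τ ≤ ε) (hg1 : 1 < g) (hgub : g ≤ 1 + τ^2/2) :
    |(x - τ*y)/g - x| ≤ ε := by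
  have hg0 : 0 < g := by linarith
  obtain ⟨hx1, hx2⟩ := abs_le.mp hx
  obtain ⟨hy1, hy2⟩ := abs_le.mp hy
  have hrew : (x - τ*y)/g - x = (x - τ*y - x*g)/g := by field_simp
  rw [hrew, abs_le]
  constructor
  · rw [le_div_iff₀ hg0]
    nlinarith [mul_nonneg (by linarith : (0:ℝ) ≤ g - 1) (by linarith : (0:ℝ) ≤ 1 - x),
      mul_nonneg hτ.le (by linarith : (0:ℝ) ≤ 1 - y),
      mul_nonneg (by linarith : (0:ℝ) ≤ ε) (by linarith : (0:ℝ) ≤ g - 1),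
      mul_nonneg hτ.le (by linarith : (0:ℝ) ≤ 1 - τ)]
  · rw [div_le_iff₀ hg0]
    nlinarith [mul_nonneg (by linarith : (0:ℝ) ≤ g - 1) (by linarith : (0:ℝ) ≤ 1 + x),
      mul_nonneg hτ.le (by linarith : (0:ℝ) ≤ 1 + y),
      mul_nonneg (by linarith : (0:ℝ) ≤ ε) (by linarith : (0:ℝ) ≤ g - 1),
      mul_nonneg hτ.le (by linarith : (0:ℝ) ≤ 1 - τ)]

private lemma disk_convex (u v r : ℝ) : Convex ℝ {p : ℝ×ℝ | (p.1-u)^2+(p.2-v)^2 ≤ r^2} := by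
  intro p hp q hq a b ha hb hab
  simp only [Set.mem_setOf_eq] at *
  have h1 : (a•p+b•q : ℝ×ℝ).1 = a*p.1+b*q.1 := rfl
  have h2 : (a•p+b•q : ℝ×ℝ).2 = a*p.2+b*q.2 := rfl
  rw [h1, h2]
  have hb' : b = 1 - a := by linarith
  subst hb'
  have hXY : (p.1-u)*(q.1-u)+(p.2-v)*(q.2-v) ≤ r^2 := by
    nlinarith [sq_nonneg ((p.1-u)-(q.1-u)), sq_nonneg ((p.2-v)-(q.2-v))]
  have A1 := mul_le_mul_of_nonneg_left hp (sq_nonneg a)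
  have A2 := mul_le_mul_of_nonneg_left hq (sq_nonneg (1-a))
  have A3 := mul_le_mul_of_nonneg_left hXY
    (by nlinarith : (0:ℝ) ≤ 2*a*(1-a))
  nlinarith [A1, A2, A3]

private lemma disk_compact (u v r : ℝ) : IsCompact {p : ℝ×ℝ | (p.1-u)^2+(p.2-v)^2 ≤ r^2} := by
  apply Metric.isCompact_of_isClosed_isBounded
  · exact isClosed_le (by continuity) continuous_const
  · apply Bornology.IsBounded.subset (Metric.isBounded_closedBall (x := (u,v)) (r := |r|))
    intro p hp
    simp only [Set.mem_setOf_eq] at hp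
    simp only [Metric.mem_closedBall, Prod.dist_eq, Real.dist_eq, max_le_iff]
    constructor
    · nlinarith [sq_abs (p.1-u), sq_abs r, abs_nonneg (p.1-u), abs_nonneg r, sq_nonneg (p.2-v)]
    · nlinarith [sq_abs (p.2-v), sq_abs r, abs_nonneg (p.2-v), abs_nonneg r, sq_nonneg (p.1-u)]

private lemma disk_subset_conv_circle {u v r : ℝ} (hr : 0 ≤ r) :
    {p : ℝ×ℝ | (p.1-u)^2+(p.2-v)^2 ≤ r^2} ⊆
      convexHull ℝ {p : ℝ×ℝ | (p.1-u)^2+(p.2-v)^2 = r^2} := by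
  intro p hp
  simp only [Set.mem_setOf_eq] at hp
  by_cases hρ : (p.1-u)^2+(p.2-v)^2 = 0
  · have hx : p.1 - u = 0 := by nlinarith [sq_nonneg (p.1-u), sq_nonneg (p.2-v)]
    have hy : p.2 - v = 0 := by nlinarith [sq_nonneg (p.1-u), sq_nonneg (p.2-v)]
    have h1 : ((u+r, v) : ℝ×ℝ) ∈ {p : ℝ×ℝ | (p.1-u)^2+(p.2-v)^2 = r^2} := by
      simp only [Set.mem_setOf_eq]; ring
    have h2 : ((u-r, v) : ℝ×ℝ) ∈ {p : ℝ×ℝ | (p.1-u)^2+(p.2-v)^2 = r^2} := by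
      simp only [Set.mem_setOf_eq]; ring
    have hseg : p ∈ segment ℝ ((u+r, v) : ℝ×ℝ) ((u-r, v) : ℝ×ℝ) := by
      refine ⟨1/2, 1/2, by norm_num, by norm_num, by norm_num, ?_⟩
      apply Prod.ext
      · show (1/2:ℝ)*(u+r) + (1/2:ℝ)*(u-r) = p.1
        have e1 : p.1 = u := by linarith
        rw [e1]; ring
      · show (1/2:ℝ)*v + (1/2:ℝ)*v = p.2
        have e2 : p.2 = v := by linarith
        rw [e2]; ring
    exact segment_subset_convexHull h1 h2 hseg
  · set x := p.1 - u with hxdef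
    set y := p.2 - v with hydef
    have hs2 : 0 < x^2 + y^2 := lt_of_le_of_ne (by positivity) (Ne.symm hρ)
    set t := Real.sqrt ((r^2 - (x^2+y^2))/(x^2+y^2)) with htdef
    have ht2 : t^2 = (r^2 - (x^2+y^2))/(x^2+y^2) :=
      Real.sq_sqrt (by apply div_nonneg (by linarith) hs2.le)
    have hkey : (x^2+y^2) * t^2 = r^2 - (x^2+y^2) := by
      rw [ht2]; field_simp
    have h1 : ((u + x - t*y, v + y + t*x) : ℝ×ℝ) ∈ {p : ℝ×ℝ | (p.1-u)^2+(p.2-v)^2 = r^2} := by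
      show ((u + x - t*y) - u)^2 + ((v + y + t*x) - v)^2 = r^2
      linear_combination hkey
    have h2 : ((u + x + t*y, v + y - t*x) : ℝ×ℝ) ∈ {p : ℝ×ℝ | (p.1-u)^2+(p.2-v)^2 = r^2} := by
      show ((u + x + t*y) - u)^2 + ((v + y - t*x) - v)^2 = r^2
      linear_combination hkey
    have hseg : p ∈ segment ℝ ((u + x - t*y, v + y + t*x) : ℝ×ℝ) ((u + x + t*y, v + y - t*x) : ℝ×ℝ) := by
      refine ⟨1/2, 1/2, by norm_num, by norm_num, by norm_num, ?_⟩
      apply Prod.ext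
      · show (1/2:ℝ)*(u + x - t*y) + (1/2:ℝ)*(u + x + t*y) = p.1
        have hpx : p.1 = u + x := by rw [hxdef]; ring
        rw [hpx]; ring
      · show (1/2:ℝ)*(v + y + t*x) + (1/2:ℝ)*(v + y - t*x) = p.2
        have hpy : p.2 = v + y := by rw [hydef]; ring
        rw [hpy]; ring
    exact segment_subset_convexHull h1 h2 hseg

private lemma conv_circle_eq_disk {u v r : ℝ} (hr : 0 ≤ r) :
    convexHull ℝ {p : ℝ×ℝ | (p.1-u)^2+(p.2-v)^2 = r^2}
      = {p : ℝ×ℝ | (p.1-u)^2+(p.2-v)^2 ≤ r^2} := by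
  apply Set.Subset.antisymm
  · exact convexHull_min (fun q hq => le_of_eq hq) (disk_convex u v r)
  · exact disk_subset_conv_circle hr

private lemma isCompact_convexJoin {s t : Set (ℝ×ℝ)} (hs : IsCompact s) (ht : IsCompact t) :
    IsCompact (convexJoin ℝ s t) := by
  have heq : convexJoin ℝ s t =
      (fun q : ℝ × ((ℝ×ℝ) × (ℝ×ℝ)) => (1 - q.1) • q.2.1 + q.1 • q.2.2) ''
        ((Set.Icc (0:ℝ) 1) ×ˢ (s ×ˢ t)) := by
    ext z
    rw [mem_convexJoin]
    constructor
    · rintro ⟨x, hx, y, hy, hz⟩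
      rw [segment_eq_image] at hz
      obtain ⟨θ, hθ, hθz⟩ := hz
      exact ⟨(θ, x, y), ⟨hθ, hx, hy⟩, hθz⟩
    · rintro ⟨⟨θ, x, y⟩, ⟨hθ, hx, hy⟩, hz⟩
      refine ⟨x, hx, y, hy, ?_⟩
      rw [segment_eq_image]
      exact ⟨θ, hθ, hz⟩
  rw [heq]
  exact ((isCompact_Icc).prod (hs.prod ht)).image (by fun_prop)

private lemma conv_sUnion_compact {X : Set (Set (ℝ×ℝ))} (hX : X.Finite) :
    (∀ C ∈ X, IsCircle C) → IsCompact (convexHull ℝ (⋃₀ X)) := by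
  refine Set.Finite.induction_on
    (motive := fun X _ => (∀ C ∈ X, IsCircle C) → IsCompact (convexHull ℝ (⋃₀ X)))
    X hX (by intro _; simp) ?_
  intro C X hCX hXfin ih hcirc
  obtain ⟨u, v, r, hr, hCeq⟩ := hcirc C (Set.mem_insert _ _)
  have hCconv : IsCompact (convexHull ℝ C) := by
    rw [hCeq, conv_circle_eq_disk hr]
    exact disk_compact u v r
  have hCne : C.Nonempty := by
    refine ⟨(u+r, v), ?_⟩
    rw [hCeq]; show (u+r-u)^2 + (v-v)^2 = r^2; ring
  have hrest := ih (fun D hD => hcirc D (Set.mem_insert_of_mem _ hD))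
  rw [Set.sUnion_insert]
  rcases Set.eq_empty_or_nonempty (⋃₀ X) with he | hne
  · rw [he, Set.union_empty]; exact hCconv
  · rw [convexHull_union hCne hne]
    exact isCompact_convexJoin hCconv hrest

set_option maxHeartbeats 2000000 in
private lemma anti_ex {S C D : Set (ℝ×ℝ)} {c1 c2 r d1 d2 s : ℝ}
    (hr : 0 ≤ r) (hs : 0 ≤ s)
    (hCeq : C = {p : ℝ×ℝ | (p.1-c1)^2+(p.2-c2)^2 = r^2})
    (hDeq : D = {p : ℝ×ℝ | (p.1-d1)^2+(p.2-d2)^2 = s^2})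
    (hAcomp : IsCompact (convexHull ℝ S))
    (hDnA : ¬ D ⊆ convexHull ℝ S)
    (hC : C ⊆ convexHull ℝ (S ∪ D))
    (hD : D ⊆ convexHull ℝ (S ∪ C)) :
    C = D := by
  obtain ⟨p, hpD, hpA⟩ := Set.not_subset.mp hDnA
  obtain ⟨a₀, b₀, K, ε, hunit, hε, hmain⟩ :
      ∃ a₀ b₀ K ε : ℝ, a₀^2+b₀^2 = 1 ∧ 0 < ε ∧
        ∀ a' b' : ℝ, |a'-a₀| ≤ ε → |b'-b₀| ≤ ε →
          (∀ q ∈ convexHull ℝ S, a'*q.1+b'*q.2 ≤ K) ∧ K < a'*p.1+b'*p.2 := by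
    rcases Set.eq_empty_or_nonempty (convexHull ℝ S) with hAe | hAne
    · -- empty hull case
      set R := |p.1| + |p.2| with hR
      have hR0 : 0 ≤ R := by positivity
      have hden : (0:ℝ) < 2*R+2 := by linarith
      refine ⟨1, 0, p.1 - 1, 1/(2*R+2), by norm_num, by positivity, ?_⟩
      intro a' b' h1 h2
      constructor
      · intro q hq; rw [hAe] at hq; exact absurd hq (Set.notMem_empty q)
      · have hp1R : |p.1| ≤ R := le_add_of_nonneg_right (abs_nonneg _)
        have hp2R : |p.2| ≤ R := le_add_of_nonneg_left (abs_nonneg _)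
        have hb := perturb_bound h1 (by simpa using h2) hp1R hp2R (by positivity)
        have habs := abs_le.mp hb
        have hlt : 2*(1/(2*R+2))*R < 1 := by
          rw [show 2*(1/(2*R+2))*R = 2*R/(2*R+2) by field_simp]
          rw [div_lt_one hden]; linarith
        have hsplit : a'*p.1+b'*p.2 = p.1 + ((a'-1)*p.1 + (b'-0)*p.2) := by ring
        linarith [habs.1]
    · -- nonempty hull case
      have hclosed := hAcomp.isClosed
      obtain ⟨f, u₀, hfA, hu₀p⟩ :=
        geometric_hahn_banach_closed_point (convex_convexHull ℝ S) hclosed hpA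
      set a := f (1,0) with hadef
      set b := f (0,1) with hbdef
      have flin : ∀ q : ℝ×ℝ, f q = a*q.1 + b*q.2 := by
        intro q
        have hq : q = q.1 • ((1:ℝ),(0:ℝ)) + q.2 • ((0:ℝ),(1:ℝ)) := by
          apply Prod.ext <;> simp
        conv_lhs => rw [hq]
        rw [map_add, map_smul, map_smul, smul_eq_mul, smul_eq_mul]
        ring
      have hne0 : a^2 + b^2 ≠ 0 := by
        intro h0
        have ha0 : a = 0 := by nlinarith [sq_nonneg a, sq_nonneg b]
        have hb0 : b = 0 := by nlinarith [sq_nonneg a, sq_nonneg b]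
        obtain ⟨q₀, hq₀⟩ := hAne
        have h1 := hfA q₀ hq₀
        rw [flin q₀, ha0, hb0] at h1
        rw [flin p, ha0, hb0] at hu₀p
        simp at h1 hu₀p
        linarith
      have hab : 0 < a^2+b^2 := lt_of_le_of_ne (by positivity) (Ne.symm hne0)
      set n := Real.sqrt (a^2+b^2) with hndef
      have hn2 : n^2 = a^2+b^2 := Real.sq_sqrt hab.le
      have hn : 0 < n := Real.sqrt_pos.mpr hab
      have hunit : (a/n)^2+(b/n)^2 = 1 := by
        field_simp
        exact hn2.symm
      obtain ⟨R₀, hR₀⟩ := hAcomp.isBounded.subset_closedBall 0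
      set R := |R₀| + |p.1| + |p.2| + 1 with hRdef
      have hRpos : (0:ℝ) < R := by positivity
      have hR1 : ∀ q ∈ convexHull ℝ S, |q.1| ≤ R ∧ |q.2| ≤ R := by
        intro q hq
        have hq' := hR₀ hq
        rw [Metric.mem_closedBall, dist_zero_right] at hq'
        have h1 : ‖q.1‖ ≤ ‖q‖ := norm_fst_le q
        have h2 : ‖q.2‖ ≤ ‖q‖ := norm_snd_le q
        rw [Real.norm_eq_abs] at h1 h2
        have hle : R₀ ≤ R := by
          have := le_abs_self R₀
          have := abs_nonneg p.1
          have := abs_nonneg p.2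
          linarith
        exact ⟨by linarith, by linarith⟩
      have hpR1 : |p.1| ≤ R := by
        have := abs_nonneg R₀; have := abs_nonneg p.2; linarith
      have hpR2 : |p.2| ≤ R := by
        have := abs_nonneg R₀; have := abs_nonneg p.1; linarith
      have hmA : ∀ q ∈ convexHull ℝ S, (a/n)*q.1+(b/n)*q.2 ≤ u₀/n := by
        intro q hq
        have h1 := hfA q hq
        rw [flin q] at h1
        have h2 : (a*q.1+b*q.2)/n ≤ u₀/n :=
          div_le_div_of_nonneg_right h1.le hn.le
        calc (a/n)*q.1+(b/n)*q.2 = (a*q.1+b*q.2)/n := by ring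
          _ ≤ u₀/n := h2
      have hmp : u₀/n < (a/n)*p.1+(b/n)*p.2 := by
        rw [flin p] at hu₀p
        calc u₀/n < (a*p.1+b*p.2)/n := by
              apply div_lt_div_of_pos_right hu₀p hn
          _ = (a/n)*p.1+(b/n)*p.2 := by ring
      set m := (a/n)*p.1+(b/n)*p.2 - u₀/n with hmdef
      have hm0 : 0 < m := by simp only [hmdef]; linarith
      have hεpos : 0 < m/(8*R) := div_pos hm0 (by linarith)
      refine ⟨a/n, b/n, u₀/n + m/4, m/(8*R), hunit, hεpos, ?_⟩
      intro a' b' h1 h2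
      have h2εR : 2*(m/(8*R))*R = m/4 := by field_simp; ring
      constructor
      · intro q hq
        obtain ⟨hq1, hq2⟩ := hR1 q hq
        have hbnd := perturb_bound h1 h2 hq1 hq2 hεpos.le
        rw [h2εR] at hbnd
        have habs := abs_le.mp hbnd
        have hsplit : a'*q.1+b'*q.2 = ((a/n)*q.1+(b/n)*q.2) + ((a'-a/n)*q.1 + (b'-b/n)*q.2) := by
          ring
        have := hmA q hq
        linarith [habs.2]
      · have hbnd := perturb_bound h1 h2 hpR1 hpR2 hεpos.le
        rw [h2εR] at hbnd
        have habs := abs_le.mp hbnd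
        have hsplit : a'*p.1+b'*p.2 = ((a/n)*p.1+(b/n)*p.2) + ((a'-a/n)*p.1 + (b'-b/n)*p.2) := by
          ring
        linarith [habs.1]
  -- the key support-equality
  have key : ∀ a' b' : ℝ, a'^2+b'^2 = 1 → |a'-a₀| ≤ ε → |b'-b₀| ≤ ε →
      a'*c1 + b'*c2 + r = a'*d1 + b'*d2 + s := by
    intro a' b' hu h1 h2
    obtain ⟨hAb, hpb⟩ := hmain a' b' h1 h2
    have hpd : a'*p.1+b'*p.2 ≤ a'*d1+b'*d2+s := by
      apply dot_le_supp hu hs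
      rw [hDeq] at hpD; exact hpD
    have hDK : K < a'*d1+b'*d2+s := lt_of_lt_of_le hpb hpd
    have hDle : a'*d1+b'*d2+s ≤ max K (a'*c1+b'*c2+r) := by
      have hmem : ((d1 + s*a', d2 + s*b') : ℝ×ℝ) ∈ D := by
        rw [hDeq]; show (d1+s*a'-d1)^2 + (d2+s*b'-d2)^2 = s^2
        linear_combination s^2 * hu
      have hbound : ∀ q ∈ S ∪ C, a'*q.1+b'*q.2 ≤ max K (a'*c1+b'*c2+r) := by
        rintro q (hq | hq)
        · exact le_max_of_le_left (hAb q (subset_convexHull ℝ S hq))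
        · refine le_max_of_le_right ?_
          apply dot_le_supp hu hr
          rw [hCeq] at hq; exact hq
      have h3 := conv_halfspace hbound _ (hD hmem)
      have heq2 : a'*((d1 + s*a' : ℝ)) + b'*((d2 + s*b' : ℝ)) = a'*d1+b'*d2+s := by
        linear_combination s*hu
      calc a'*d1+b'*d2+s = a'*(d1+s*a') + b'*(d2+s*b') := heq2.symm
        _ ≤ _ := h3
    have hDC : a'*d1+b'*d2+s ≤ a'*c1+b'*c2+r :=
      (le_max_iff.mp hDle).resolve_left (by linarith)
    have hCK : K < a'*c1+b'*c2+r := lt_of_lt_of_le hDK hDC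
    have hCle : a'*c1+b'*c2+r ≤ max K (a'*d1+b'*d2+s) := by
      have hmem : ((c1 + r*a', c2 + r*b') : ℝ×ℝ) ∈ C := by
        rw [hCeq]; show (c1+r*a'-c1)^2 + (c2+r*b'-c2)^2 = r^2
        linear_combination r^2 * hu
      have hbound : ∀ q ∈ S ∪ D, a'*q.1+b'*q.2 ≤ max K (a'*d1+b'*d2+s) := by
        rintro q (hq | hq)
        · exact le_max_of_le_left (hAb q (subset_convexHull ℝ S hq))
        · refine le_max_of_le_right ?_
          apply dot_le_supp hu hs
          rw [hDeq] at hq; exact hq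
      have h3 := conv_halfspace hbound _ (hC hmem)
      have heq2 : a'*((c1 + r*a' : ℝ)) + b'*((c2 + r*b' : ℝ)) = a'*c1+b'*c2+r := by
        linear_combination r*hu
      calc a'*c1+b'*c2+r = a'*(c1+r*a') + b'*(c2+r*b') := heq2.symm
        _ ≤ _ := h3
    have hCD : a'*c1+b'*c2+r ≤ a'*d1+b'*d2+s :=
      (le_max_iff.mp hCle).resolve_left (by linarith)
    linarith
  -- three directions force equal circles
  set τ := min (ε/2) 1 with hτdef
  have hτ : 0 < τ := lt_min (by linarith) one_pos
  have hτ1 : τ ≤ 1 := min_le_right _ _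
  have hτε : 2*τ ≤ ε := by
    have := min_le_left (ε/2) 1
    have : τ ≤ ε/2 := this
    linarith
  set g := Real.sqrt (1+τ^2) with hgdef
  have hg2 : g^2 = 1+τ^2 := Real.sq_sqrt (by positivity)
  have hg0 : 0 < g := Real.sqrt_pos.mpr (by positivity)
  have hg1 : 1 < g := by nlinarith
  have hgub : g ≤ 1 + τ^2/2 := by nlinarith [sq_nonneg (τ^2)]
  have ha₀ : |a₀| ≤ 1 := by
    rw [abs_le]
    constructor <;> nlinarith [sq_nonneg b₀, sq_nonneg (a₀+1), sq_nonneg (a₀-1)]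
  have hb₀ : |b₀| ≤ 1 := by
    rw [abs_le]
    constructor <;> nlinarith [sq_nonneg a₀, sq_nonneg (b₀+1), sq_nonneg (b₀-1)]
  have e0 := key a₀ b₀ hunit (by simpa using hε.le) (by simpa using hε.le)
  have hu1 : ((a₀-τ*b₀)/g)^2 + ((b₀+τ*a₀)/g)^2 = 1 := by
    rw [div_pow, div_pow, ← add_div, div_eq_one_iff_eq (by positivity)]
    linear_combination (1+τ^2)*hunit - hg2
  have hu2 : ((a₀+τ*b₀)/g)^2 + ((b₀-τ*a₀)/g)^2 = 1 := by
    rw [div_pow, div_pow, ← add_div, div_eq_one_iff_eq (by positivity)]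
    linear_combination (1+τ^2)*hunit - hg2
  have hpa1 : |(a₀-τ*b₀)/g - a₀| ≤ ε := pert_aux ha₀ hb₀ hτ hτ1 hτε hg1 hgub
  have hpb1 : |(b₀+τ*a₀)/g - b₀| ≤ ε := by
    have h := pert_aux hb₀ (by rw [abs_neg]; exact ha₀) hτ hτ1 hτε hg1 hgub
    rw [show b₀ - τ*(-a₀) = b₀ + τ*a₀ by ring] at h
    exact h
  have hpa2 : |(a₀+τ*b₀)/g - a₀| ≤ ε := by
    have h := pert_aux ha₀ (by rw [abs_neg]; exact hb₀) hτ hτ1 hτε hg1 hgub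
    rw [show a₀ - τ*(-b₀) = a₀ + τ*b₀ by ring] at h
    exact h
  have hpb2 : |(b₀-τ*a₀)/g - b₀| ≤ ε := pert_aux hb₀ ha₀ hτ hτ1 hτε hg1 hgub
  have eP := key _ _ hu1 hpa1 hpb1
  have eM := key _ _ hu2 hpa2 hpb2
  have EP : (a₀-τ*b₀)*c1 + (b₀+τ*a₀)*c2 + r*g = (a₀-τ*b₀)*d1 + (b₀+τ*a₀)*d2 + s*g := by
    field_simp [hg0.ne'] at eP
    linear_combination eP
  have EM : (a₀+τ*b₀)*c1 + (b₀-τ*a₀)*c2 + r*g = (a₀+τ*b₀)*d1 + (b₀-τ*a₀)*d2 + s*g := by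
    field_simp [hg0.ne'] at eM
    linear_combination eM
  have f1 : (r - s)*(g - 1) = 0 := by
    linear_combination (1/2 : ℝ)*EP + (1/2 : ℝ)*EM - e0
  have hrs : r = s := by
    rcases mul_eq_zero.mp f1 with h | h
    · linarith
    · exact absurd h (sub_ne_zero.mpr (ne_of_gt hg1))
  have f2 : a₀*(c1-d1) + b₀*(c2-d2) = 0 := by linear_combination e0 - hrs
  have f3' : (2*τ)*(-b₀*(c1-d1) + a₀*(c2-d2)) = 0 := by linear_combination EP - EM
  have f3 : -b₀*(c1-d1) + a₀*(c2-d2) = 0 :=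
    (mul_eq_zero.mp f3').resolve_left (by positivity)
  have hc1 : c1 = d1 := by linear_combination a₀*f2 - b₀*f3 - (c1-d1)*hunit
  have hc2 : c2 = d2 := by linear_combination b₀*f2 + a₀*f3 - (c2-d2)*hunit
  rw [hCeq, hDeq, hc1, hc2, hrs]

theorem stmt1 (F : Set (Set (ℝ × ℝ))) (hF : F.Finite) (hcirc : ∀ C ∈ F, IsCircle C) :
    (∀ X, X ⊆ F → X ⊆ circCh F X) ∧
    (∀ X, X ⊆ F → circCh F (circCh F X) = circCh F X) ∧
    (∀ X Y, X ⊆ Y → Y ⊆ F → circCh F X ⊆ circCh F Y) ∧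
    circCh F ∅ = ∅ ∧
    (∀ X, X ⊆ F → circCh F X = X →
      ∀ C ∈ F, ∀ D ∈ F, C ∉ X → D ∉ X → C ≠ D →
        C ∈ circCh F (X ∪ {D}) → D ∉ circCh F (X ∪ {C})) := by
  refine ⟨?_, ?_, ?_, ?_, ?_⟩
  · intro X hXF C hC
    exact ⟨hXF hC, (Set.subset_sUnion_of_mem hC).trans (subset_convexHull ℝ _)⟩
  · intro X _
    apply Set.Subset.antisymm
    · rintro C ⟨hCF, hsub⟩
      refine ⟨hCF, hsub.trans ?_⟩
      apply convexHull_min _ (convex_convexHull ℝ _)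
      rintro q ⟨T, hT, hq⟩
      exact hT.2 hq
    · rintro C ⟨hCF, hsub⟩
      exact ⟨hCF, fun p hp => subset_convexHull ℝ _ ⟨C, ⟨hCF, hsub⟩, hp⟩⟩
  · intro X Y hXY _ C hC
    exact ⟨hC.1, hC.2.trans (convexHull_mono (Set.sUnion_mono hXY))⟩
  · ext C
    simp only [circCh, Set.mem_setOf_eq, Set.mem_empty_iff_false, iff_false, not_and]
    intro hCF hsub
    obtain ⟨u, v, r, hr, hCeq⟩ := hcirc C hCF
    have hmem : (u+r, v) ∈ C := by
      rw [hCeq]; show (u+r-u)^2 + (v-v)^2 = r^2; ring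
    have := hsub hmem
    simp at this
  · intro X hXF hfix C hCF D hDF hCX hDX hne hCin hDin
    obtain ⟨c1, c2, r, hr, hCeq⟩ := hcirc C hCF
    obtain ⟨d1, d2, s, hs, hDeq⟩ := hcirc D hDF
    have hUD : ⋃₀ (X ∪ {D}) = ⋃₀ X ∪ D := by
      rw [Set.sUnion_union, Set.sUnion_singleton]
    have hUC : ⋃₀ (X ∪ {C}) = ⋃₀ X ∪ C := by
      rw [Set.sUnion_union, Set.sUnion_singleton]
    have hAcomp : IsCompact (convexHull ℝ (⋃₀ X)) :=
      conv_sUnion_compact (hF.subset hXF) (fun E hE => hcirc E (hXF hE))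
    have hDnA : ¬ D ⊆ convexHull ℝ (⋃₀ X) := by
      intro hcon
      exact hDX (hfix ▸ (⟨hDF, hcon⟩ : D ∈ circCh F X))
    have hCsub : C ⊆ convexHull ℝ (⋃₀ X ∪ D) := by
      have := hCin.2; rwa [hUD] at this
    have hDsub : D ⊆ convexHull ℝ (⋃₀ X ∪ C) := by
      have := hDin.2; rwa [hUC] at this
    exact hne (anti_ex hr hs hCeq hDeq hAcomp hDnA hCsub hDsub)
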